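/- arXiv:2007.11902 — 4 statements merged into one kernel-verified Lean document; each statement's English description precedes it below -/
import Mathlib

section
/- The function h₂(t) = log(exp(-max(1-t,0)) + exp(-max(1+t,0))) satisfies |h₂(t)| ≤ 1 - log 2 for all real t. -/
open Real in
lemma h2_sum_bounds (t : ℝ) :
    2 / Real.exp 1 ≤ Real.exp (-(max (1 - t) 0)) + Real.exp (-(max (1 + t) 0)) ∧
    Real.exp (-(max (1 - t) 0)) + Real.exp (-(max (1 + t) 0)) ≤ Real.exp 1 / 2 := by
  have hE : Real.exp 1 > 2.7182818283 := Real.exp_one_gt_d9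
  have hEpos : (0:ℝ) < Real.exp 1 := Real.exp_pos 1
  rcases le_total 1 t with h1 | h1
  · -- t ≥ 1 : max(1-t,0)=0, max(1+t,0)=1+t
    rw [max_eq_right (by linarith), max_eq_left (by linarith), neg_zero, Real.exp_zero]
    have hb : Real.exp (-(1 + t)) ≤ Real.exp (-2) := Real.exp_le_exp.2 (by linarith)
    have h2 : Real.exp (-2) * (Real.exp 1 * Real.exp 1) = 1 := by
      rw [← Real.exp_add, ← Real.exp_add]; norm_num
    constructor
    · have : Real.exp (-(1+t)) > 0 := Real.exp_pos _
      rw [div_le_iff₀ hEpos]; nlinarith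
    · nlinarith [Real.exp_pos (-(1+t)), Real.exp_pos (-2)]
  rcases le_total t (-1) with h2 | h2
  · -- t ≤ -1
    rw [max_eq_left (by linarith), max_eq_right (by linarith), neg_zero, Real.exp_zero]
    have hb : Real.exp (-(1 - t)) ≤ Real.exp (-2) := Real.exp_le_exp.2 (by linarith)
    have hm : Real.exp (-2) * (Real.exp 1 * Real.exp 1) = 1 := by
      rw [← Real.exp_add, ← Real.exp_add]; norm_num
    constructor
    · rw [div_le_iff₀ hEpos]; nlinarith [Real.exp_pos (-(1-t))]
    · nlinarith [Real.exp_pos (-(1-t)), Real.exp_pos (-2)]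
  · -- -1 ≤ t ≤ 1
    rw [max_eq_left (by linarith), max_eq_left (by linarith)]
    have ha : Real.exp (-(1 - t)) * Real.exp 1 = Real.exp t := by
      rw [← Real.exp_add]; ring_nf
    have hb : Real.exp (-(1 + t)) * Real.exp 1 = Real.exp (-t) := by
      rw [← Real.exp_add]; ring_nf
    have hprod : Real.exp t * Real.exp (-t) = 1 := by
      rw [← Real.exp_add]; norm_num
    have hlo : 2 ≤ Real.exp t + Real.exp (-t) := by
      nlinarith [Real.add_one_le_exp t, Real.add_one_le_exp (-t)]
    have ht1 : Real.exp t ≤ Real.exp 1 := Real.exp_le_exp.2 h1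
    have ht2 : Real.exp (-t) ≤ Real.exp 1 := Real.exp_le_exp.2 (by linarith)
    have hhi : Real.exp 1 * (Real.exp t + Real.exp (-t)) ≤ Real.exp 1 * Real.exp 1 + 1 := by
      nlinarith [mul_nonneg (sub_nonneg.2 ht1) (sub_nonneg.2 ht2)]
    constructor
    · rw [div_le_iff₀ hEpos]; nlinarith
    · nlinarith [Real.exp_pos t, Real.exp_pos (-t)]

theorem h2_bounded :
    ∀ t : ℝ,
      |Real.log (Real.exp (-(max (1 - t) 0)) + Real.exp (-(max (1 + t) 0)))| ≤
        1 - Real.log 2 := by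
  intro t
  obtain ⟨hlo, hhi⟩ := h2_sum_bounds t
  have hSpos : 0 < Real.exp (-(max (1 - t) 0)) + Real.exp (-(max (1 + t) 0)) := by positivity
  have hEpos : (0:ℝ) < Real.exp 1 := Real.exp_pos 1
  rw [abs_le]
  constructor
  · rw [neg_sub]
    calc Real.log 2 - 1 = Real.log (2 / Real.exp 1) := by
          rw [Real.log_div (by norm_num) (ne_of_gt hEpos), Real.log_exp]
      _ ≤ _ := Real.log_le_log (by positivity) hlo
  · calc Real.log _ ≤ Real.log (Real.exp 1 / 2) := Real.log_le_log hSpos hhi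
      _ = 1 - Real.log 2 := by
          rw [Real.log_div (ne_of_gt hEpos) (by norm_num), Real.log_exp]
end

section
/- For any p ∈ (0,1), the function h(t) = p·max(1-t,0) + (1-p)·max(1+t,0) + log(exp(-max(1-t,0)) + exp(-max(1+t,0))) is coercive in t. -/
theorem h_coercive (p : ℝ) (hp : p ∈ Set.Ioo (0 : ℝ) 1) :
    Filter.Tendsto
      (fun t : ℝ =>
        p * max (1 - t) 0 + (1 - p) * max (1 + t) 0 +
          Real.log (Real.exp (-(max (1 - t) 0)) + Real.exp (-(max (1 + t) 0))))
      (Filter.comap (fun t : ℝ => |t|) Filter.atTop) Filter.atTop := by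
  obtain ⟨hp0, hp1⟩ := hp
  have hc0 : 0 < min p (1 - p) := lt_min hp0 (by linarith)
  have habs : Filter.Tendsto (fun t : ℝ => |t|)
      (Filter.comap (fun t : ℝ => |t|) Filter.atTop) Filter.atTop :=
    Filter.tendsto_comap
  refine Filter.tendsto_atTop_mono ?_ (habs.const_mul_atTop hc0)
  intro t
  have hA : (0:ℝ) ≤ max (1 - t) 0 := le_max_right _ _
  have hB : (0:ℝ) ≤ max (1 + t) 0 := le_max_right _ _
  have hlogA : -(max (1 - t) 0) ≤
      Real.log (Real.exp (-(max (1 - t) 0)) + Real.exp (-(max (1 + t) 0))) := by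
    calc -(max (1 - t) 0) = Real.log (Real.exp (-(max (1 - t) 0))) := (Real.log_exp _).symm
    _ ≤ _ := Real.log_le_log (Real.exp_pos _) (le_add_of_nonneg_right (Real.exp_pos _).le)
  have hlogB : -(max (1 + t) 0) ≤
      Real.log (Real.exp (-(max (1 - t) 0)) + Real.exp (-(max (1 + t) 0))) := by
    calc -(max (1 + t) 0) = Real.log (Real.exp (-(max (1 + t) 0))) := (Real.log_exp _).symm
    _ ≤ _ := Real.log_le_log (Real.exp_pos _) (le_add_of_nonneg_left (Real.exp_pos _).le)
  have hcp : min p (1 - p) ≤ p := min_le_left _ _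
  have hcq : min p (1 - p) ≤ 1 - p := min_le_right _ _
  rcases le_total 0 t with ht | ht
  · rw [abs_of_nonneg ht]
    have hBe : max (1 + t) 0 = 1 + t := max_eq_left (by linarith)
    have hA1 : max (1 - t) 0 ≤ 1 := max_le (by linarith) (by linarith)
    nlinarith [hlogA, mul_nonneg (sub_nonneg.2 hcq) ht]
  · rw [abs_of_nonpos ht]
    have hAe : max (1 - t) 0 = 1 - t := max_eq_left (by linarith)
    have hB1 : max (1 + t) 0 ≤ 1 := max_le (by linarith) (by linarith)
    nlinarith [hlogB, mul_nonneg (sub_nonneg.2 hcp) (neg_nonneg.2 ht)]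
end

section
/- Let h : ℝ → ℝ be continuous and coercive, and let a ∈ ℝⁿ be a nonzero vector. Then the function θ ↦ h(aᵀθ) on ℝⁿ is continuous, and its sublevel sets are unbounded precisely in directions orthogonal to a; in particular, if a₁,...,aₙ ∈ ℝⁿ satisfy ⋂ᵢ {θ : aᵢᵀθ = 0} = {0}, then θ ↦ Σᵢ h(aᵢᵀθ) is coercive on ℝⁿ, provided h is bounded below. -/
theorem composed_coercive (n : ℕ)
    (h : ℝ → ℝ)
    (hcont : Continuous h)
    (hcoer : Filter.Tendsto h (Filter.comap (fun t : ℝ => |t|) Filter.atTop) Filter.atTop)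
    (hbdd : BddBelow (Set.range h))
    (a : Fin n → EuclideanSpace ℝ (Fin n))
    (hnull : ⋂ i, {θ : EuclideanSpace ℝ (Fin n) | ∑ j, a i j * θ j = 0} = {0}) :
    (∀ i, Continuous (fun θ : EuclideanSpace ℝ (Fin n) => h (∑ j, a i j * θ j))) ∧
      Filter.Tendsto (fun θ : EuclideanSpace ℝ (Fin n) => ∑ i, h (∑ j, a i j * θ j))
        (Filter.comap (fun θ => ‖θ‖) Filter.atTop) Filter.atTop := by
  have hinner : ∀ i, Continuous (fun θ : EuclideanSpace ℝ (Fin n) => ∑ j, a i j * θ j) := by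
    intro i
    refine continuous_finset_sum _ (fun j _ => ?_)
    exact continuous_const.mul ((continuous_apply j).comp (PiLp.continuous_ofLp 2 _))
  let L : EuclideanSpace ℝ (Fin n) →ₗ[ℝ] EuclideanSpace ℝ (Fin n) :=
    { toFun := fun θ => (WithLp.toLp 2 (fun i => ∑ j, a i j * θ j) : EuclideanSpace ℝ (Fin n))
      map_add' := by
        intro x y; ext i
        show (∑ j, a i j * (x j + y j)) = (∑ j, a i j * x j) + (∑ j, a i j * y j)
        simp [mul_add, Finset.sum_add_distrib]
      map_smul' := by
        intro c x; ext i
        show (∑ j, a i j * (c * x j)) = c * ∑ j, a i j * x j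
        simp [Finset.mul_sum, mul_left_comm] }
  have hLinj : Function.Injective L := by
    rw [← LinearMap.ker_eq_bot, LinearMap.ker_eq_bot']
    intro θ hθ
    have hmem : θ ∈ ⋂ i, {θ : EuclideanSpace ℝ (Fin n) | ∑ j, a i j * θ j = 0} := by
      simp only [Set.mem_iInter, Set.mem_setOf_eq]
      intro i
      exact congrArg (fun v : EuclideanSpace ℝ (Fin n) => v i) hθ
    rw [hnull] at hmem
    exact hmem
  have hLsurj : Function.Surjective L :=
    (LinearMap.injective_iff_surjective).mp hLinj
  let eL : EuclideanSpace ℝ (Fin n) ≃L[ℝ] EuclideanSpace ℝ (Fin n) :=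
    (LinearEquiv.ofBijective L ⟨hLinj, hLsurj⟩).toContinuousLinearEquiv
  set C := ‖(eL.symm : EuclideanSpace ℝ (Fin n) →L[ℝ] EuclideanSpace ℝ (Fin n))‖ with hC
  have hCnn : 0 ≤ C := norm_nonneg _
  have hbound : ∀ θ : EuclideanSpace ℝ (Fin n), ‖θ‖ ≤ C * ‖L θ‖ := by
    intro θ
    have heq : eL.symm (L θ) = θ := eL.symm_apply_apply θ
    calc ‖θ‖ = ‖eL.symm (L θ)‖ := by rw [heq]
    _ ≤ C * ‖L θ‖ :=
        (eL.symm : EuclideanSpace ℝ (Fin n) →L[ℝ] EuclideanSpace ℝ (Fin n)).le_opNorm _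
  refine ⟨fun i => hcont.comp (hinner i), ?_⟩
  obtain ⟨b, hb⟩ := hbdd
  rw [Filter.tendsto_atTop]
  intro M
  have hM' : ∀ᶠ t in Filter.comap (fun t : ℝ => |t|) Filter.atTop,
      M - (n - 1 : ℝ) * b ≤ h t := hcoer.eventually (Filter.eventually_ge_atTop _)
  rw [Filter.eventually_comap, Filter.eventually_atTop] at hM'
  obtain ⟨T, hT⟩ := hM'
  have hTkey : ∀ t : ℝ, T ≤ |t| → M - (n - 1 : ℝ) * b ≤ h t := fun t ht => hT |t| ht t rfl
  rw [Filter.eventually_comap, Filter.eventually_atTop]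
  refine ⟨max 1 (C * Real.sqrt n * T + 1), fun r hr θ hθ => ?_⟩
  subst hθ
  have hθbig : max 1 (C * Real.sqrt n * T + 1) ≤ ‖θ‖ := hr
  have hθ1 : (1 : ℝ) ≤ ‖θ‖ := le_trans (le_max_left _ _) hθbig
  have hn : 0 < n := by
    have hθne : θ ≠ 0 := by
      intro hz
      rw [hz, norm_zero] at hθ1
      linarith
    have : ∃ j : Fin n, θ j ≠ 0 := by
      by_contra hcon
      push_neg at hcon
      exact hθne (by ext j; exact hcon j)
    obtain ⟨j, _⟩ := this
    exact j.pos
  have hex : ∃ i, T ≤ |∑ j, a i j * θ j| := by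
    by_contra hcon
    push_neg at hcon
    have hT0 : 0 < T := by
      have := hcon ⟨0, hn⟩
      exact lt_of_le_of_lt (abs_nonneg _) this
    have hnorm : ‖L θ‖ ≤ Real.sqrt n * T := by
      have h1 : ‖L θ‖ = Real.sqrt (∑ i, (∑ j, a i j * θ j) ^ 2) := by
        rw [EuclideanSpace.norm_eq]
        congr 1
        refine Finset.sum_congr rfl (fun i _ => ?_)
        show ‖(∑ j, a i j * θ j)‖ ^ 2 = _
        rw [Real.norm_eq_abs, sq_abs]
      rw [h1]
      have h2 : (∑ i, (∑ j, a i j * θ j) ^ 2) ≤ n * T ^ 2 := by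
        calc (∑ i, (∑ j, a i j * θ j) ^ 2) ≤ ∑ _i : Fin n, T ^ 2 := by
              refine Finset.sum_le_sum (fun i _ => ?_)
              have := (hcon i).le
              nlinarith [abs_nonneg (∑ j, a i j * θ j), sq_abs (∑ j, a i j * θ j)]
        _ = n * T ^ 2 := by simp [mul_comm]
      calc Real.sqrt (∑ i, (∑ j, a i j * θ j) ^ 2) ≤ Real.sqrt (n * T ^ 2) :=
            Real.sqrt_le_sqrt h2
      _ = Real.sqrt n * T := by
            rw [Real.sqrt_mul (Nat.cast_nonneg n), Real.sqrt_sq hT0.le]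
    have hle : ‖θ‖ ≤ C * (Real.sqrt n * T) :=
      le_trans (hbound θ) (mul_le_mul_of_nonneg_left hnorm hCnn)
    have h3 : C * Real.sqrt n * T + 1 ≤ ‖θ‖ := le_trans (le_max_right _ _) hθbig
    linarith
  obtain ⟨i₀, hi₀⟩ := hex
  have hterm : M - (n - 1 : ℝ) * b ≤ h (∑ j, a i₀ j * θ j) := hTkey _ hi₀
  have hsum : ∑ i, h (∑ j, a i j * θ j) =
      h (∑ j, a i₀ j * θ j) + ∑ i ∈ Finset.univ.erase i₀, h (∑ j, a i j * θ j) :=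
    (Finset.add_sum_erase _ _ (Finset.mem_univ i₀)).symm
  have hrest : (n - 1 : ℝ) * b ≤ ∑ i ∈ Finset.univ.erase i₀, h (∑ j, a i j * θ j) := by
    have hcard : (Finset.univ.erase i₀).card = n - 1 := by
      rw [Finset.card_erase_of_mem (Finset.mem_univ i₀)]
      simp
    calc (n - 1 : ℝ) * b = ∑ _i ∈ Finset.univ.erase i₀, b := by
          rw [Finset.sum_const, hcard, nsmul_eq_mul]
          congr 1
          push_cast [Nat.cast_sub hn]
          ring
    _ ≤ ∑ i ∈ Finset.univ.erase i₀, h (∑ j, a i j * θ j) :=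
          Finset.sum_le_sum (fun i _ => hb (Set.mem_range_self _))
  rw [hsum]
  linarith
end

section
/- Let h̃₁(θ) = [1 - a₁ᵀθ]₊ + [1 + a₂ᵀθ]₊ with a₁, a₂ ∈ ℝⁿ. If for every nonzero θ ∈ ℝⁿ either a₁ᵀθ < 0 or a₂ᵀθ > 0, then h̃₁ is coercive on ℝⁿ. -/
theorem htilde1_coercive (n : ℕ) (a₁ a₂ : EuclideanSpace ℝ (Fin n))
    (hcond : ∀ θ : EuclideanSpace ℝ (Fin n), θ ≠ 0 →
      (∑ j, a₁ j * θ j) < 0 ∨ 0 < ∑ j, a₂ j * θ j) :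
    Filter.Tendsto
      (fun θ : EuclideanSpace ℝ (Fin n) =>
        max (1 - ∑ j, a₁ j * θ j) 0 + max (1 + ∑ j, a₂ j * θ j) 0)
      (Filter.comap (fun θ => ‖θ‖) Filter.atTop) Filter.atTop := by
  classical
  let E := EuclideanSpace ℝ (Fin n)
  have hinner : ∀ (a θ : E), (inner ℝ a θ : ℝ) = ∑ j, a j * θ j := by
    intro a θ
    rw [PiLp.inner_apply]
    simp [RCLike.inner_apply, mul_comm]
  by_cases hn : n = 0
  · -- degenerate case: the filter is ⊥
    subst hn
    have hbot : Filter.comap (fun θ : E => ‖θ‖) Filter.atTop = ⊥ := by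
      rw [Filter.comap_eq_bot_iff_compl_range]
      filter_upwards [Filter.Ioi_mem_atTop 0] with x hx
      rintro ⟨θ, rfl⟩
      have : θ = 0 := Subsingleton.elim _ _
      rw [this] at hx
      simp at hx
    rw [hbot]
    exact Filter.tendsto_bot
  · -- main case
    haveI : Nontrivial E := by
      refine ⟨EuclideanSpace.single ⟨0, Nat.pos_of_ne_zero hn⟩ (1 : ℝ), 0, ?_⟩
      intro h
      have h1 : ‖EuclideanSpace.single (⟨0, Nat.pos_of_ne_zero hn⟩ : Fin n) (1 : ℝ)‖ = 1 := by
        simp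
      rw [h] at h1
      simp at h1
    -- continuous function on the sphere
    set f : E → ℝ := fun u => max (-(inner ℝ a₁ u : ℝ)) (inner ℝ a₂ u : ℝ) with hf
    have hfc : Continuous f :=
      ((continuous_const.inner continuous_id).neg).max
        (continuous_const.inner continuous_id)
    have hsc : IsCompact (Metric.sphere (0 : E) 1) := isCompact_sphere 0 1
    have hsne : (Metric.sphere (0 : E) 1).Nonempty :=
      NormedSpace.sphere_nonempty.mpr zero_le_one
    obtain ⟨u₀, hu₀, hmin⟩ := hsc.exists_isMinOn hsne hfc.continuousOn
    have hu₀norm : ‖u₀‖ = 1 := by simpa using hu₀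
    have hu₀ne : u₀ ≠ 0 := by
      intro h; rw [h] at hu₀norm; simp at hu₀norm
    have hc : 0 < f u₀ := by
      rcases hcond u₀ hu₀ne with h | h
      · rw [← hinner] at h
        exact lt_max_of_lt_left (by linarith)
      · rw [← hinner] at h
        exact lt_max_of_lt_right h
    set c := f u₀ with hcdef
    -- lower bound: c * ‖θ‖ ≤ h θ for all θ
    have hbound : ∀ θ : E,
        c * ‖θ‖ ≤ max (1 - ∑ j, a₁ j * θ j) 0 + max (1 + ∑ j, a₂ j * θ j) 0 := by
      intro θ
      by_cases hθ : θ = 0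
      · subst hθ
        have h4 : (0:ℝ) ≤ max (1 - ∑ j, a₁ j * (0:E) j) 0 := le_max_right _ _
        have h5 : (0:ℝ) ≤ max (1 + ∑ j, a₂ j * (0:E) j) 0 := le_max_right _ _
        simp only [norm_zero, mul_zero]
        linarith
      · have hr : 0 < ‖θ‖ := norm_pos_iff.mpr hθ
        set u : E := ‖θ‖⁻¹ • θ with hu
        have hun : u ∈ Metric.sphere (0 : E) 1 := by
          simp [hu, norm_smul, abs_of_pos (inv_pos.mpr hr), inv_mul_cancel₀ hr.ne']
        have hfu : c ≤ f u := hmin hun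
        have h1 : (inner ℝ a₁ u : ℝ) = ‖θ‖⁻¹ * (inner ℝ a₁ θ : ℝ) := by
          rw [hu, real_inner_smul_right]
        have h2 : (inner ℝ a₂ u : ℝ) = ‖θ‖⁻¹ * (inner ℝ a₂ θ : ℝ) := by
          rw [hu, real_inner_smul_right]
        rw [hf] at hfu
        simp only [h1, h2] at hfu
        rw [le_max_iff] at hfu
        have e1 : (inner ℝ a₁ θ : ℝ) = ∑ j, a₁ j * θ j := hinner a₁ θ
        have e2 : (inner ℝ a₂ θ : ℝ) = ∑ j, a₂ j * θ j := hinner a₂ θ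
        rcases hfu with h | h
        · have : c * ‖θ‖ ≤ -(∑ j, a₁ j * θ j) := by
            rw [← e1]
            have := mul_le_mul_of_nonneg_right h hr.le
            calc c * ‖θ‖ ≤ -(‖θ‖⁻¹ * (inner ℝ a₁ θ : ℝ)) * ‖θ‖ := this
              _ = -(inner ℝ a₁ θ : ℝ) := by field_simp
          have h3 : 1 - ∑ j, a₁ j * θ j ≤ max (1 - ∑ j, a₁ j * θ j) 0 := le_max_left _ _
          have h4 : (0:ℝ) ≤ max (1 + ∑ j, a₂ j * θ j) 0 := le_max_right _ _
          linarith
        · have : c * ‖θ‖ ≤ ∑ j, a₂ j * θ j := by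
            rw [← e2]
            have := mul_le_mul_of_nonneg_right h hr.le
            calc c * ‖θ‖ ≤ (‖θ‖⁻¹ * (inner ℝ a₂ θ : ℝ)) * ‖θ‖ := this
              _ = (inner ℝ a₂ θ : ℝ) := by field_simp
          have h3 : 1 + ∑ j, a₂ j * θ j ≤ max (1 + ∑ j, a₂ j * θ j) 0 := le_max_left _ _
          have h4 : (0:ℝ) ≤ max (1 - ∑ j, a₁ j * θ j) 0 := le_max_right _ _
          linarith
    have hnorm : Filter.Tendsto (fun θ : E => ‖θ‖)
        (Filter.comap (fun θ : E => ‖θ‖) Filter.atTop) Filter.atTop :=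
      Filter.tendsto_comap
    have hcmul : Filter.Tendsto (fun θ : E => c * ‖θ‖)
        (Filter.comap (fun θ : E => ‖θ‖) Filter.atTop) Filter.atTop :=
      hnorm.const_mul_atTop hc
    exact Filter.tendsto_atTop_mono hbound hcmul
end
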